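/- arXiv:2404.13157 — 2 statements merged into one kernel-verified Lean document; each statement's English description precedes it below -/
import Mathlib

section
/- Let (X, Σ, μ) be a complete measure space of finite measure admitting a lower density λ : Σ → Σ. Then there exists a lifting on (X, Σ, μ): a map Λ : Σ → Σ that preserves the ambient space, the empty set, finite intersections and finite unions, is an almost-everywhere identity (μ(Λ(Q) Δ Q) = 0 for all Q ∈ Σ), and strongly preserves the measure class (μ(Q Δ R) = 0 implies Λ(Q) = Λ(R)). -/
open MeasureTheory

/-- A "null filter": a collection of measurable sets, containing `univ`, closed under
intersections, upward closed modulo `μ`-null sets, and containing no null set. -/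
def IsNF {X : Type*} [MeasurableSpace X] (μ : Measure X) (F : Set (Set X)) : Prop :=
  (∀ Q ∈ F, MeasurableSet Q) ∧ Set.univ ∈ F ∧
  (∀ Q ∈ F, ∀ R ∈ F, Q ∩ R ∈ F) ∧
  (∀ Q ∈ F, ∀ R : Set X, MeasurableSet R → μ (Q \ R) = 0 → R ∈ F) ∧
  (∀ Q ∈ F, μ Q ≠ 0)

lemma nf_dichotomy {X : Type*} [MeasurableSpace X] (μ : Measure X)
    (u : Set (Set X)) (hu : IsNF μ u)
    (hmax : ∀ F, IsNF μ F → u ⊆ F → F = u)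
    (Q : Set X) (hQ : MeasurableSet Q) : Q ∈ u ∨ Qᶜ ∈ u := by
  obtain ⟨humeas, huuniv, huinter, huup, hunn⟩ := hu
  by_cases h : ∃ T ∈ u, μ (T ∩ Q) = 0
  · obtain ⟨T, hTu, hT0⟩ := h
    right
    refine huup T hTu Qᶜ hQ.compl ?_
    simpa [Set.diff_eq] using hT0
  · push_neg at h
    left
    set F : Set (Set X) := {S | MeasurableSet S ∧ ∃ T ∈ u, μ ((T ∩ Q) \ S) = 0} with hF
    have hFNF : IsNF μ F := by
      refine ⟨fun S hS => hS.1, ⟨MeasurableSet.univ, Set.univ, huuniv, by simp⟩, ?_, ?_, ?_⟩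
      · rintro S₁ ⟨hS₁m, T₁, hT₁u, hT₁0⟩ S₂ ⟨hS₂m, T₂, hT₂u, hT₂0⟩
        refine ⟨hS₁m.inter hS₂m, T₁ ∩ T₂, huinter T₁ hT₁u T₂ hT₂u, ?_⟩
        have hsub : ((T₁ ∩ T₂) ∩ Q) \ (S₁ ∩ S₂) ⊆ ((T₁ ∩ Q) \ S₁) ∪ ((T₂ ∩ Q) \ S₂) := by
          intro x hx
          rcases hx with ⟨⟨⟨h1, h2⟩, hq⟩, hns⟩
          by_cases hxS : x ∈ S₁
          · right; exact ⟨⟨h2, hq⟩, fun hx2 => hns ⟨hxS, hx2⟩⟩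
          · left; exact ⟨⟨h1, hq⟩, hxS⟩
        exact le_antisymm (le_trans (measure_mono hsub)
          (le_of_eq (measure_union_null hT₁0 hT₂0))) zero_le
      · rintro S ⟨hSm, T, hTu, hT0⟩ R hRm hSR
        refine ⟨hRm, T, hTu, ?_⟩
        have hsub : (T ∩ Q) \ R ⊆ ((T ∩ Q) \ S) ∪ (S \ R) := by
          intro x hx
          rcases hx with ⟨hx1, hx2⟩
          by_cases hxS : x ∈ S
          · right; exact ⟨hxS, hx2⟩
          · left; exact ⟨hx1, hxS⟩
        exact le_antisymm (le_trans (measure_mono hsub)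
          (le_of_eq (measure_union_null hT0 hSR))) zero_le
      · rintro S ⟨hSm, T, hTu, hT0⟩ hS0
        apply h T hTu
        have hsub : T ∩ Q ⊆ ((T ∩ Q) \ S) ∪ S := by
          intro x hx
          by_cases hxS : x ∈ S
          · right; exact hxS
          · left; exact ⟨hx, hxS⟩
        exact le_antisymm (le_trans (measure_mono hsub)
          (le_of_eq (measure_union_null hT0 hS0))) zero_le
    have huF : u ⊆ F := by
      intro T hTu
      refine ⟨humeas T hTu, T, hTu, ?_⟩
      have h0 : (T ∩ Q) \ T = (∅ : Set X) := by ext y; simp; tauto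
      rw [h0]; exact measure_empty
    have hQF : Q ∈ F := ⟨hQ, Set.univ, huuniv, by simp⟩
    rw [hmax F hFNF huF] at hQF
    exact hQF

theorem exists_lifting_of_lowerDensity
    {X : Type*} [MeasurableSpace X] (μ : Measure X)
    [IsFiniteMeasure μ] (hcomp : μ.IsComplete)
    (lam : Set X → Set X)
    (hmeas : ∀ Q : Set X, MeasurableSet Q → MeasurableSet (lam Q))
    (hpas : lam Set.univ = Set.univ)
    (hpes : lam (∅ : Set X) = ∅)
    (hpfi : ∀ Q R : Set X, MeasurableSet Q → MeasurableSet R →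
      lam (Q ∩ R) = lam Q ∩ lam R)
    (haei : ∀ Q : Set X, MeasurableSet Q → μ (symmDiff (lam Q) Q) = 0)
    (hspmc : ∀ Q R : Set X, MeasurableSet Q → MeasurableSet R →
      μ (symmDiff Q R) = 0 → lam Q = lam R) :
    ∃ Λ : Set X → Set X,
      (∀ Q : Set X, MeasurableSet Q → MeasurableSet (Λ Q)) ∧
      Λ Set.univ = Set.univ ∧
      Λ (∅ : Set X) = ∅ ∧
      (∀ Q R : Set X, MeasurableSet Q → MeasurableSet R →
        Λ (Q ∩ R) = Λ Q ∩ Λ R) ∧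
      (∀ Q R : Set X, MeasurableSet Q → MeasurableSet R →
        Λ (Q ∪ R) = Λ Q ∪ Λ R) ∧
      (∀ Q : Set X, MeasurableSet Q → μ (symmDiff (Λ Q) Q) = 0) ∧
      (∀ Q R : Set X, MeasurableSet Q → MeasurableSet R →
        μ (symmDiff Q R) = 0 → Λ Q = Λ R) := by
  classical
  -- the filter base at each point
  set Fb : X → Set (Set X) := fun x => {Q | MeasurableSet Q ∧ x ∈ lam Q} with hFbdef
  have hFbNF : ∀ x, IsNF μ (Fb x) := by
    intro x
    refine ⟨fun Q hQ => hQ.1, ⟨MeasurableSet.univ, by rw [hpas]; trivial⟩, ?_, ?_, ?_⟩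
    · rintro Q ⟨hQm, hQx⟩ R ⟨hRm, hRx⟩
      exact ⟨hQm.inter hRm, by rw [hpfi Q R hQm hRm]; exact ⟨hQx, hRx⟩⟩
    · rintro Q ⟨hQm, hQx⟩ R hRm hQR
      refine ⟨hRm, ?_⟩
      have h1 : lam (Q ∩ R) = lam Q := by
        apply hspmc (Q ∩ R) Q (hQm.inter hRm) hQm
        have : symmDiff (Q ∩ R) Q = Q \ R := by
          rw [Set.symmDiff_def]
          ext y; simp [Set.diff_eq]; tauto
        rw [this]; exact hQR
      have : x ∈ lam (Q ∩ R) := h1.symm ▸ hQx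
      rw [hpfi Q R hQm hRm] at this
      exact this.2
    · rintro Q ⟨hQm, hQx⟩ hQ0
      have : lam Q = lam ∅ := by
        apply hspmc Q ∅ hQm MeasurableSet.empty
        simpa using hQ0
      rw [this, hpes] at hQx
      exact hQx
  -- maximal null filters via Zorn
  have hz : ∀ x : X, ∃ u, Fb x ⊆ u ∧ IsNF μ u ∧ ∀ F, IsNF μ F → u ⊆ F → F = u := by
    intro x
    have hch : ∀ c ⊆ {F | IsNF μ F}, IsChain (· ⊆ ·) c → c.Nonempty →
        ∃ ub ∈ {F | IsNF μ F}, ∀ s ∈ c, s ⊆ ub := by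
      intro c hcS hchain hcne
      refine ⟨⋃₀ c, ⟨?_, ?_, ?_, ?_, ?_⟩, fun s hs => Set.subset_sUnion_of_mem hs⟩
      · rintro Q ⟨F, hFc, hQF⟩; exact (hcS hFc).1 Q hQF
      · obtain ⟨F, hFc⟩ := hcne
        exact ⟨F, hFc, (hcS hFc).2.1⟩
      · rintro Q ⟨F₁, hF₁c, hQ⟩ R ⟨F₂, hF₂c, hR⟩
        rcases hchain.total hF₁c hF₂c with h | h
        · exact ⟨F₂, hF₂c, (hcS hF₂c).2.2.1 Q (h hQ) R hR⟩
        · exact ⟨F₁, hF₁c, (hcS hF₁c).2.2.1 Q hQ R (h hR)⟩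
      · rintro Q ⟨F, hFc, hQ⟩ R hRm hQR
        exact ⟨F, hFc, (hcS hFc).2.2.2.1 Q hQ R hRm hQR⟩
      · rintro Q ⟨F, hFc, hQ⟩
        exact (hcS hFc).2.2.2.2 Q hQ
    obtain ⟨m, hm1, hm2⟩ := zorn_subset_nonempty {F | IsNF μ F} hch (Fb x) (hFbNF x)
    exact ⟨m, hm1, hm2.prop, fun F hF hmF => (hm2.eq_of_le hF hmF).symm⟩
  choose U hUb hUNF hUmax using hz
  -- basic facts about U x
  have hUmem : ∀ x (Q : Set X), MeasurableSet Q → x ∈ lam Q → Q ∈ U x :=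
    fun x Q hQm hx => hUb x ⟨hQm, hx⟩
  have hUup : ∀ x, ∀ Q ∈ U x, ∀ R : Set X, MeasurableSet R → μ (Q \ R) = 0 → R ∈ U x :=
    fun x => (hUNF x).2.2.2.1
  have hUnn : ∀ x, ∀ Q ∈ U x, μ Q ≠ 0 := fun x => (hUNF x).2.2.2.2
  have hUint : ∀ x, ∀ Q ∈ U x, ∀ R ∈ U x, Q ∩ R ∈ U x := fun x => (hUNF x).2.2.1
  have hUnotboth : ∀ x (Q : Set X), Q ∈ U x → Qᶜ ∈ U x → False := by
    intro x Q h1 h2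
    have := hUint x Q h1 Qᶜ h2
    rw [Set.inter_compl_self] at this
    exact hUnn x ∅ this (measure_empty)
  -- the lifting
  set Λ : Set X → Set X := fun Q => {x | Q ∈ U x} with hΛdef
  -- sandwich : lam Q ⊆ Λ Q ⊆ (lam Qᶜ)ᶜ
  have hlow : ∀ Q : Set X, MeasurableSet Q → lam Q ⊆ Λ Q :=
    fun Q hQm x hx => hUmem x Q hQm hx
  have hhigh : ∀ Q : Set X, MeasurableSet Q → Λ Q ⊆ (lam Qᶜ)ᶜ := by
    intro Q hQm x hx hxc
    exact hUnotboth x Q hx (hUmem x Qᶜ hQm.compl hxc)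
  -- the null gap
  have hgap : ∀ Q : Set X, MeasurableSet Q → μ ((lam Qᶜ)ᶜ \ lam Q) = 0 := by
    intro Q hQm
    have hsub : (lam Qᶜ)ᶜ \ lam Q ⊆ symmDiff (lam Qᶜ) Qᶜ ∪ symmDiff (lam Q) Q := by
      intro x ⟨hx1, hx2⟩
      by_cases hxQ : x ∈ Q
      · right; rw [Set.symmDiff_def]; right; exact ⟨hxQ, hx2⟩
      · left; rw [Set.symmDiff_def]; right; exact ⟨hxQ, hx1⟩
    exact le_antisymm (le_trans (measure_mono hsub)
      (le_of_eq (measure_union_null (haei Qᶜ hQm.compl) (haei Q hQm)))) zero_le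
  refine ⟨Λ, ?_, ?_, ?_, ?_, ?_, ?_, ?_⟩
  · -- measurability
    intro Q hQm
    have h1 : Λ Q = lam Q ∪ (Λ Q \ lam Q) := (Set.union_diff_cancel (hlow Q hQm)).symm
    have h2 : μ (Λ Q \ lam Q) = 0 := by
      refine le_antisymm (le_trans (measure_mono ?_) (le_of_eq (hgap Q hQm))) zero_le
      exact Set.diff_subset_diff_left (hhigh Q hQm)
    rw [h1]
    exact (hmeas Q hQm).union (hcomp.out _ h2)
  · -- univ
    ext x
    simp only [hΛdef, Set.mem_setOf_eq, Set.mem_univ, iff_true]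
    exact (hUNF x).2.1
  · -- empty
    ext x
    simp only [hΛdef, Set.mem_setOf_eq, Set.mem_empty_iff_false, iff_false]
    exact fun h => hUnn x ∅ h measure_empty
  · -- intersection
    intro Q R hQm hRm
    ext x
    simp only [hΛdef, Set.mem_setOf_eq, Set.mem_inter_iff]
    constructor
    · intro h
      constructor
      · exact hUup x (Q ∩ R) h Q hQm (by simp [Set.diff_eq_empty.mpr Set.inter_subset_left])
      · exact hUup x (Q ∩ R) h R hRm (by simp [Set.diff_eq_empty.mpr Set.inter_subset_right])
    · exact fun ⟨h1, h2⟩ => hUint x Q h1 R h2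
  · -- union
    intro Q R hQm hRm
    ext x
    simp only [hΛdef, Set.mem_setOf_eq, Set.mem_union]
    constructor
    · intro h
      by_contra hc
      push_neg at hc
      have hQc : Qᶜ ∈ U x := by
        rcases nf_dichotomy μ (U x) (hUNF x) (hUmax x) Q hQm with h' | h'
        · exact absurd h' hc.1
        · exact h'
      have hRc : Rᶜ ∈ U x := by
        rcases nf_dichotomy μ (U x) (hUNF x) (hUmax x) R hRm with h' | h'
        · exact absurd h' hc.2
        · exact h'
      have : (Q ∪ R) ∩ (Qᶜ ∩ Rᶜ) ∈ U x := hUint x (Q ∪ R) h _ (hUint x Qᶜ hQc Rᶜ hRc)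
      have he : (Q ∪ R) ∩ (Qᶜ ∩ Rᶜ) = ∅ := by
        ext y; simp; tauto
      rw [he] at this
      exact hUnn x ∅ this measure_empty
    · intro h
      rcases h with h | h
      · exact hUup x Q h (Q ∪ R) (hQm.union hRm)
          (by simp [Set.diff_eq_empty.mpr Set.subset_union_left])
      · exact hUup x R h (Q ∪ R) (hQm.union hRm)
          (by simp [Set.diff_eq_empty.mpr Set.subset_union_right])
  · -- a.e. identity
    intro Q hQm
    have hsub : symmDiff (Λ Q) Q ⊆ symmDiff (lam Q) Q ∪ symmDiff (lam Qᶜ) Qᶜ := by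
      rw [Set.symmDiff_def]
      rintro x (⟨hx1, hx2⟩ | ⟨hx1, hx2⟩)
      · right; rw [Set.symmDiff_def]; right
        exact ⟨hx2, hhigh Q hQm hx1⟩
      · left; rw [Set.symmDiff_def]; right
        exact ⟨hx1, fun hl => hx2 (hlow Q hQm hl)⟩
    exact le_antisymm (le_trans (measure_mono hsub)
      (le_of_eq (measure_union_null (haei Q hQm) (haei Qᶜ hQm.compl)))) zero_le
  · -- strong measure-class preservation
    intro Q R hQm hRm hQR
    ext x
    simp only [hΛdef, Set.mem_setOf_eq]
    have hQR' : μ (Q \ R) = 0 := by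
      refine le_antisymm (le_trans (measure_mono ?_) (le_of_eq hQR)) zero_le
      rw [Set.symmDiff_def]; exact Set.subset_union_left
    have hRQ' : μ (R \ Q) = 0 := by
      refine le_antisymm (le_trans (measure_mono ?_) (le_of_eq hQR)) zero_le
      rw [Set.symmDiff_def]; exact Set.subset_union_right
    exact ⟨fun h => hUup x Q h R hRm hQR', fun h => hUup x R h Q hQm hRQ'⟩
end

section
/- Let λ be a lifting on a complete measure space (X, Σ, μ) of finite measure, and let N be the set of points x ∈ X such that no set Q with Q = λ(Q), μ(Q) > 0 contains x in λ(Q). Then N is a null set (its outer measure is zero). -/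
open MeasureTheory

theorem lifting_exceptional_set_null
    {X : Type*} [MeasurableSpace X] (μ : Measure X)
    [IsFiniteMeasure μ] (hcomp : μ.IsComplete)
    (lam : Set X → Set X)
    (hmeas : ∀ Q : Set X, MeasurableSet Q → MeasurableSet (lam Q))
    (hpas : lam Set.univ = Set.univ)
    (hpes : lam (∅ : Set X) = ∅)
    (hpfi : ∀ Q R : Set X, MeasurableSet Q → MeasurableSet R →
      lam (Q ∩ R) = lam Q ∩ lam R)
    (hpfu : ∀ Q R : Set X, MeasurableSet Q → MeasurableSet R →
      lam (Q ∪ R) = lam Q ∪ lam R)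
    (haei : ∀ Q : Set X, MeasurableSet Q → μ (symmDiff (lam Q) Q) = 0)
    (hspmc : ∀ Q R : Set X, MeasurableSet Q → MeasurableSet R →
      μ (symmDiff Q R) = 0 → lam Q = lam R) :
    μ.toOuterMeasure
      {x : X | ∀ Q : Set X, MeasurableSet Q → Q = lam Q → 0 < μ Q → x ∉ lam Q} = 0 := by
  set N := {x : X | ∀ Q : Set X, MeasurableSet Q → Q = lam Q → 0 < μ Q → x ∉ lam Q}
  show μ N = 0
  set Q := toMeasurable μ N with hQdef
  have hQm : MeasurableSet Q := measurableSet_toMeasurable μ N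
  by_cases h0 : μ Q = 0
  · exact le_antisymm ((measure_mono (subset_toMeasurable μ N)).trans h0.le) zero_le
  · have hlm : MeasurableSet (lam Q) := hmeas Q hQm
    have hsd : μ (symmDiff (lam Q) Q) = 0 := haei Q hQm
    have hfix : lam (lam Q) = lam Q := hspmc (lam Q) Q hlm hQm hsd
    have hμeq : μ (lam Q) = μ Q :=
      measure_congr ((measure_symmDiff_eq_zero_iff).mp hsd)
    have hpos : 0 < μ (lam Q) := by
      rw [hμeq]; exact pos_iff_ne_zero.mpr h0
    have hsub : N ⊆ symmDiff (lam Q) Q := by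
      intro x hx
      have hxQ : x ∈ Q := subset_toMeasurable μ N hx
      have hxnot : x ∉ lam (lam Q) := hx (lam Q) hlm hfix.symm hpos
      rw [hfix] at hxnot
      exact Or.inr ⟨hxQ, hxnot⟩
    exact le_antisymm ((measure_mono hsub).trans hsd.le) zero_le
end
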